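/- For every 3×3 real matrix F with det F > 0 and every 3×3 real matrix L, the map t ↦ σ_iso((I + tL)·F) is differentiable at t = 0, and its derivative σ̇ there satisfies σ̇ = L·σ_iso(F) + σ_iso(F)·Lᵀ − tr(L)·σ_iso(F) + D_iso(F) : e, where e = (L + Lᵀ)/2, (D_iso(F) : e)_{ij} = Σ_{k,l} D_iso(F)_{ijkl} e_{kl}, and D_iso(F)_{ijkl} = μ·J^(−5/3)·((2/9)·tr(b)·δ_{ij}δ_{kl} − (2/3)·(b_{ij}δ_{kl} + δ_{ij}b_{kl}) + (1/3)·tr(b)·(δ_{ik}δ_{lj} + δ_{il}δ_{jk})). -/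

import Mathlib

set_option maxHeartbeats 4000000


open Matrix

/-- Kronecker delta on `Fin 3`. -/
def kdelta (i j : Fin 3) : ℝ := if i = j then 1 else 0

/-- Isochoric part of the neo-Hookean Cauchy stress:
`σ_iso(F) = μ J^(−5/3) (b − tr(b)/3 · I)` with `J = det F`, `b = F Fᵀ`. -/
noncomputable def nhSigmaIso (μ : ℝ) (F : Matrix (Fin 3) (Fin 3) ℝ) :
    Matrix (Fin 3) (Fin 3) ℝ :=
  (μ * F.det ^ (-(5 : ℝ)/3)) •
    (F * Fᵀ - ((F * Fᵀ).trace / 3) • (1 : Matrix (Fin 3) (Fin 3) ℝ))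

/-- Isochoric part of the tangent stiffness tensor. -/
noncomputable def nhDIso (μ : ℝ) (F : Matrix (Fin 3) (Fin 3) ℝ) (i j k l : Fin 3) : ℝ :=
  μ * F.det ^ (-(5 : ℝ)/3) *
    ((2/9) * (F * Fᵀ).trace * kdelta i j * kdelta k l
      - (2/3) * ((F * Fᵀ) i j * kdelta k l + kdelta i j * (F * Fᵀ) k l)
      + (1/3) * (F * Fᵀ).trace * (kdelta i k * kdelta l j + kdelta i l * kdelta j k))

attribute [local instance] Matrix.normedAddCommGroup Matrix.normedSpace

private lemma cubic_deriv (a b c d : ℝ) :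
    HasDerivAt (fun t : ℝ => a + b*t + c*t^2 + d*t^3) b 0 := by
  have h1 : HasDerivAt (fun t:ℝ => t) 1 0 := hasDerivAt_id 0
  have h2 : HasDerivAt (fun t:ℝ => t^2) 0 0 := by simpa using hasDerivAt_pow 2 (0:ℝ)
  have h3 : HasDerivAt (fun t:ℝ => t^3) 0 0 := by simpa using hasDerivAt_pow 3 (0:ℝ)
  have := (((h1.const_mul b).const_add a).add (h2.const_mul c)).add (h3.const_mul d)
  exact this.congr_deriv (by ring)

private lemma quad_deriv (a b c : ℝ) :
    HasDerivAt (fun t : ℝ => a + b*t + c*t^2) b 0 := by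
  have h1 : HasDerivAt (fun t:ℝ => t) 1 0 := hasDerivAt_id 0
  have h2 : HasDerivAt (fun t:ℝ => t^2) 0 0 := by simpa using hasDerivAt_pow 2 (0:ℝ)
  have := ((h1.const_mul b).const_add a).add (h2.const_mul c)
  exact this.congr_deriv (by ring)

/-- the map `t ↦ σ_iso((I + tL)·F)` is differentiable at `t = 0` and its
derivative there equals `L·σ_iso + σ_iso·Lᵀ − tr(L)·σ_iso + D_iso(F) : e`,
with `e = (L + Lᵀ)/2`. -/
theorem nhSigmaIso_truesdell_rate (μ : ℝ) (F L : Matrix (Fin 3) (Fin 3) ℝ)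
    (hF : 0 < F.det) :
    HasDerivAt (fun t : ℝ => nhSigmaIso μ ((1 + t • L) * F))
      (L * nhSigmaIso μ F + nhSigmaIso μ F * Lᵀ - L.trace • nhSigmaIso μ F
        + Matrix.of fun i j =>
            ∑ k, ∑ l, nhDIso μ F i j k l * (((1 : ℝ)/2) • (L + Lᵀ)) k l) 0 := by
  have hJ : F.det ≠ 0 := ne_of_gt hF
  have hG : ∀ t : ℝ, (1 + t • L) * F = F + t • (L * F) := by
    intro t; rw [add_mul, one_mul, Matrix.smul_mul]
  -- determinant as cubic
  have hdetfun : (fun t : ℝ => ((1 + t • L) * F).det)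
      = fun t => F.det + (L.trace * F.det) * t
          + ((L.trace^2 - (L*L).trace)/2 * F.det) * t^2 + (L.det * F.det) * t^3 := by
    funext t
    simp only [hG, Matrix.det_fin_three, Matrix.mul_apply, Matrix.add_apply,
      Matrix.smul_apply, Fin.sum_univ_three, Matrix.trace, Matrix.diag, smul_eq_mul]
    ring
  have hdet : HasDerivAt (fun t : ℝ => ((1 + t • L) * F).det) (L.trace * F.det) 0 := by
    rw [hdetfun]; exact cubic_deriv _ _ _ _
  have hpow : HasDerivAt (fun t : ℝ => ((1 + t • L) * F).det ^ (-(5:ℝ)/3))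
      (L.trace * F.det * (-(5:ℝ)/3) * ((1 + (0:ℝ) • L) * F).det ^ (-(5:ℝ)/3 - 1)) 0 :=
    hdet.rpow_const (Or.inl (by simpa using hJ))
  -- entries of b(t) as quadratics
  have hBfun : ∀ i j : Fin 3,
      (fun t : ℝ => ((((1 + t • L) * F) * ((1 + t • L) * F)ᵀ : Matrix (Fin 3) (Fin 3) ℝ)) i j)
        = fun t => (F * Fᵀ) i j + ((L * (F * Fᵀ) + (F * Fᵀ) * Lᵀ) i j) * t
            + ((L * (F * Fᵀ) * Lᵀ) i j) * t^2 := by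
    intro i j
    funext t
    simp only [hG, Matrix.mul_apply, Matrix.transpose_apply, Matrix.add_apply,
      Matrix.smul_apply, Fin.sum_univ_three, smul_eq_mul]
    ring
  have hB : ∀ i j : Fin 3,
      HasDerivAt
        (fun t : ℝ => ((((1 + t • L) * F) * ((1 + t • L) * F)ᵀ : Matrix (Fin 3) (Fin 3) ℝ)) i j)
        ((L * (F * Fᵀ) + (F * Fᵀ) * Lᵀ) i j) 0 := by
    intro i j; rw [hBfun i j]; exact quad_deriv _ _ _
  refine hasDerivAt_pi.mpr fun i => hasDerivAt_pi.mpr fun j => ?_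
  have hfun : (fun t : ℝ => nhSigmaIso μ ((1 + t • L) * F) i j)
      = fun t : ℝ => (μ * ((1 + t • L) * F).det ^ (-(5:ℝ)/3)) *
          (((((1 + t • L) * F) * ((1 + t • L) * F)ᵀ : Matrix (Fin 3) (Fin 3) ℝ)) i j
            - (((((1 + t • L) * F) * ((1 + t • L) * F)ᵀ : Matrix (Fin 3) (Fin 3) ℝ)) 0 0
                + ((((1 + t • L) * F) * ((1 + t • L) * F)ᵀ : Matrix (Fin 3) (Fin 3) ℝ)) 1 1
                + ((((1 + t • L) * F) * ((1 + t • L) * F)ᵀ : Matrix (Fin 3) (Fin 3) ℝ)) 2 2)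
              / 3 * (1 : Matrix (Fin 3) (Fin 3) ℝ) i j) := by
    funext t
    simp only [nhSigmaIso, Matrix.smul_apply, Matrix.sub_apply, smul_eq_mul,
      Matrix.trace, Matrix.diag, Fin.sum_univ_three]
  have hTr := ((hB 0 0).add (hB 1 1)).add (hB 2 2)
  have hsub := (hB i j).sub
    ((hTr.div_const 3).mul_const ((1 : Matrix (Fin 3) (Fin 3) ℝ) i j))
  have H := (hpow.const_mul μ).mul hsub
  rw [hfun]
  refine H.congr_deriv (Eq.symm ?_)
  simp only [Pi.add_apply, Pi.sub_apply]
  simp only [zero_smul, add_zero, one_mul]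
  rw [Real.rpow_sub_one hJ]
  simp only [nhSigmaIso, nhDIso, kdelta]
  generalize F * Fᵀ = B
  fin_cases i <;> fin_cases j <;>
  · simp [Matrix.mul_apply, Matrix.add_apply, Matrix.sub_apply, Matrix.smul_apply,
      Matrix.of_apply, Matrix.one_apply, Matrix.trace, Matrix.diag, Fin.sum_univ_three,
      smul_eq_mul, Matrix.transpose_apply]
    field_simp
    ring
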